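/- Let V be a symmetric monoidal closed category, A = (A, m_A, e_A) a monoid and C = (C, δ_C, ε_C) a comonoid in V, and t : A ⊗ C → 𝟙 a left pairing, i.e. t ∘ (e_A ⊗ C) = ε_C (up to the unit isomorphism) and t ∘ (m_A ⊗ C) = t ∘ (A ⊗ t ⊗ C) ∘ (A ⊗ A ⊗ δ_C). For each object X let α_X : C ⊗ X → [A, X] be the transpose, under the adjunction A ⊗ − ⊣ [A, −], of the morphism A ⊗ C ⊗ X → X given by t ⊗ X (composed with the unit isomorphism), and let γ : C → A* = [A, 𝟙] be the transpose of t composed with the symmetry (i.e. the transpose of t ∘ τ_{C,A} : C ⊗ A → 𝟙). If α_X is a monomorphism for every object X of V, then γ is pure: γ ⊗ id_X : C ⊗ X → A* ⊗ X is a monomorphism for every object X of V. -/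

import Mathlib

open CategoryTheory MonoidalCategory MonoidalClosed

universe v u

/-- **Proposition 5.9(1).** Let `V` be a symmetric monoidal closed category, `A` a
monoid and `C` a comonoid in `V`, and `t : A ⊗ C ⟶ 𝟙` a left pairing, i.e.
`t ∘ (e_A ⊗ C) = ε_C` and `t ∘ (m_A ⊗ C) = t ∘ (A ⊗ t ⊗ C) ∘ (A ⊗ A ⊗ δ_C)`.
For each `X` let `α_X : C ⊗ X ⟶ [A, X]` be the transpose of `(t ⊗ X)` (composed
with the structural isomorphisms), and let `γ : C ⟶ A* = [A, 𝟙]` be the transpose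
of `t ∘ τ_{C,A}`.  If every `α_X` is a monomorphism, then `γ` is pure: every
`γ ⊗ id_X` is a monomorphism. -/
theorem pure_of_rational_pairing {V : Type u} [Category.{v} V]
    [MonoidalCategory V] [SymmetricCategory V] [MonoidalClosed V]
    (M : Mon V) (Cn : Comon V) (t : M.X ⊗ Cn.X ⟶ 𝟙_ V)
    (h₁ : (λ_ Cn.X).inv ≫ (MonObj.one (X := M.X) ▷ Cn.X) ≫ t = ComonObj.counit (X := Cn.X))
    (h₂ : (MonObj.mul (X := M.X) ▷ Cn.X) ≫ t =
      ((M.X ⊗ M.X) ◁ ComonObj.comul (X := Cn.X)) ≫ (α_ M.X M.X (Cn.X ⊗ Cn.X)).hom ≫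
        (M.X ◁ (α_ M.X Cn.X Cn.X).inv) ≫ (M.X ◁ (t ▷ Cn.X)) ≫
          (M.X ◁ (λ_ Cn.X).hom) ≫ t)
    (hmono : ∀ X : V,
      Mono (curry ((α_ M.X Cn.X X).inv ≫ (t ▷ X) ≫ (λ_ X).hom))) :
    ∀ X : V,
      Mono ((curry ((β_ M.X Cn.X).hom ≫ (β_ Cn.X M.X).hom ≫ t)) ▷ X) := by
  intro X
  have hγ : (β_ M.X Cn.X).hom ≫ (β_ Cn.X M.X).hom ≫ t = t := by
    rw [← Category.assoc, SymmetricCategory.symmetry, Category.id_comp]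
  rw [hγ]
  set m : ((ihom M.X).obj (𝟙_ V)) ⊗ X ⟶ (ihom M.X).obj X :=
    curry ((α_ M.X _ X).inv ≫ ((ihom.ev M.X).app (𝟙_ V) ▷ X) ≫ (λ_ X).hom) with hm
  have key : curry ((α_ M.X Cn.X X).inv ≫ (t ▷ X) ≫ (λ_ X).hom)
      = (curry t ▷ X) ≫ m := by
    rw [eq_comm, eq_curry_iff, uncurry_natural_left, hm, uncurry_curry]
    have ht : uncurry (curry t) = t := uncurry_curry t
    rw [uncurry_eq] at ht
    slice_lhs 1 2 => rw [associator_inv_naturality_middle]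
    simp only [Category.assoc]
    rw [← comp_whiskerRight_assoc, ht]
  have := hmono X
  rw [key] at this
  exact mono_of_mono _ m
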